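/- Let (E,J,R) be a dH triple whose pencil λE − (J−R) is regular. If E is Hermitian positive definite, then there is no pair (ΔJ,ΔR) ∈ S_d(J,R) for which the pencil λE − (J+ΔJ) + (R+ΔR) is singular (so d_sing^{S_d}(J,R) = ∞). If E is singular, let r := dim ker E ≥ 1 and let N ∈ ℂ^{n×r} be a matrix whose columns form an orthonormal basis of ker E; then (d_sing^{S_d}(J,R))² = inf_{x ∈ ℂʳ\{0}} { (x*N*R²Nx/(x*N*RNx))² + x*N*J*JNx/(x*x) }, where a quotient with numerator and denominator both zero is interpreted as 0. -/

import Mathlib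

open Matrix
open scoped ComplexOrder ENNReal

noncomputable section

/-- Euclidean norm of a complex vector. -/
def vecNorm {ι : Type*} [Fintype ι] (x : ι → ℂ) : ℝ :=
  Real.sqrt (∑ i, Complex.normSq (x i))

/-- Spectral norm (largest singular value; the ℓ²→ℓ² operator norm). -/
def specNorm {ι κ : Type*} [Fintype ι] [Fintype κ] [DecidableEq κ] (A : Matrix ι κ ℂ) : ℝ :=
  ‖(Matrix.toEuclideanLin A).toContinuousLinearMap‖

/-- Size of a perturbation pair: `sqrt(‖ΔJ‖² + ‖ΔR‖²)` (spectral norms). -/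
def pairNorm {n : ℕ} (dJ dR : Matrix (Fin n) (Fin n) ℂ) : ℝ :=
  Real.sqrt (specNorm dJ ^ 2 + specNorm dR ^ 2)

/-- Membership in the structured perturbation set `S_d(J,R)` (with `E` fixed). -/
def SdJR {n : ℕ} (R dJ dR : Matrix (Fin n) (Fin n) ℂ) : Prop :=
  dJᴴ = -dJ ∧ (-dR).PosSemidef ∧ (R + dR).PosSemidef

/-- Membership in the structured perturbation set `S_i(J,R)` (with `E` fixed). -/
def SiJR {n : ℕ} (R dJ dR : Matrix (Fin n) (Fin n) ℂ) : Prop :=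
  dJᴴ = -dJ ∧ dR.IsHermitian ∧ (R + dR).PosSemidef

/-- The pencil `λE − A` is singular: `det(λE − A) = 0` for all `λ`. -/
def pencilSingular {n : ℕ} (E' A : Matrix (Fin n) (Fin n) ℂ) : Prop :=
  ∀ lam : ℂ, Matrix.det (lam • E' - A) = 0

/-- Structured distance to singularity with respect to `S_d(J,R)` (perturbing only `J` and
`R`), in `[0,∞]`. -/
def dSingSdJR {n : ℕ} (E J R : Matrix (Fin n) (Fin n) ℂ) : ℝ≥0∞ :=
  sInf {c : ℝ≥0∞ | ∃ dJ dR : Matrix (Fin n) (Fin n) ℂ, SdJR R dJ dR ∧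
    pencilSingular E (J + dJ - (R + dR)) ∧ c = ENNReal.ofReal (pairNorm dJ dR)}

namespace Aux
variable {m k : ℕ}

lemma dot_eq_inner (x y : Fin m → ℂ) :
    star x ⬝ᵥ y = @inner ℂ _ _ ((WithLp.equiv 2 (Fin m → ℂ)).symm x) ((WithLp.equiv 2 (Fin m → ℂ)).symm y) := by
  simp [PiLp.inner_apply, dotProduct, mul_comm]

lemma vecNorm_eq (x : Fin m → ℂ) : vecNorm x = ‖(WithLp.equiv 2 (Fin m → ℂ)).symm x‖ := by
  rw [EuclideanSpace.norm_eq, vecNorm]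
  congr 1
  refine Finset.sum_congr rfl fun i _ => ?_
  rw [Complex.normSq_eq_norm_sq]
  rfl

lemma vecNorm_nonneg (x : Fin m → ℂ) : 0 ≤ vecNorm x := Real.sqrt_nonneg _

lemma dot_self_re (x : Fin m → ℂ) : (star x ⬝ᵥ x).re = vecNorm x ^ 2 := by
  rw [dot_eq_inner, vecNorm_eq]
  rw [← @inner_self_eq_norm_sq ℂ]
  rfl

lemma mulVec_bound (A : Matrix (Fin m) (Fin k) ℂ) (x : Fin k → ℂ) :
    vecNorm (A *ᵥ x) ≤ specNorm A * vecNorm x := by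
  rw [vecNorm_eq, vecNorm_eq]
  have := (Matrix.toEuclideanLin A).toContinuousLinearMap.le_opNorm ((WithLp.equiv 2 (Fin k → ℂ)).symm x)
  simpa [Matrix.toEuclideanLin_apply, specNorm] using this

lemma specNorm_le (A : Matrix (Fin m) (Fin k) ℂ) (c : ℝ) (hc : 0 ≤ c)
    (h : ∀ x, vecNorm (A *ᵥ x) ≤ c * vecNorm x) : specNorm A ≤ c := by
  apply ContinuousLinearMap.opNorm_le_bound _ hc
  intro x
  have := h ((WithLp.equiv 2 (Fin k → ℂ)) x)
  rw [vecNorm_eq, vecNorm_eq] at this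
  simpa [Matrix.toEuclideanLin_apply] using this

end Aux

namespace Aux2
open Aux
variable {m : ℕ}

lemma vecNorm_pos {x : Fin m → ℂ} (hx : x ≠ 0) : 0 < vecNorm x := by
  rcases (vecNorm_nonneg x).lt_or_eq with h | h
  · exact h
  · exfalso
    apply hx
    have h2 : ‖(WithLp.equiv 2 (Fin m → ℂ)).symm x‖ = 0 := by rw [← vecNorm_eq, ← h]
    exact congrArg (WithLp.equiv 2 (Fin m → ℂ)) (norm_eq_zero.mp h2)

lemma dot_self_eq_ofReal (z : Fin m → ℂ) :
    star z ⬝ᵥ z = ((vecNorm z ^ 2 : ℝ) : ℂ) := by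
  rw [dot_eq_inner, vecNorm_eq]
  rw [@inner_self_eq_norm_sq_to_K ℂ]
  norm_cast

lemma dot_nonneg_parts {S : Matrix (Fin m) (Fin m) ℂ} (hS : S.PosSemidef) (x : Fin m → ℂ) :
    0 ≤ (star x ⬝ᵥ S *ᵥ x).re ∧ (star x ⬝ᵥ S *ᵥ x).im = 0 := by
  have := hS.dotProduct_mulVec_nonneg x
  rw [Complex.le_def] at this
  exact ⟨by simpa using this.1, by simpa using this.2.symm⟩

lemma herm_dot {S : Matrix (Fin m) (Fin m) ℂ} (hS : Sᴴ = S) (x z : Fin m → ℂ) :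
    star x ⬝ᵥ S *ᵥ z = star (S *ᵥ x) ⬝ᵥ z := by
  rw [star_mulVec, hS, dotProduct_mulVec]

-- Cauchy-Schwarz, plain
lemma dot_CS (x y : Fin m → ℂ) : ‖star x ⬝ᵥ y‖ ≤ vecNorm x * vecNorm y := by
  rw [dot_eq_inner, vecNorm_eq, vecNorm_eq]
  exact norm_inner_le_norm _ _

-- Cauchy-Schwarz for a PSD form
open scoped MatrixOrder in
lemma dot_CS_psd {S : Matrix (Fin m) (Fin m) ℂ} (hS : S.PosSemidef) (x y : Fin m → ℂ) :
    ‖star x ⬝ᵥ S *ᵥ y‖ ^ 2 ≤ (star x ⬝ᵥ S *ᵥ x).re * (star y ⬝ᵥ S *ᵥ y).re := by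
  classical
  obtain ⟨B, rfl⟩ := CStarAlgebra.nonneg_iff_eq_star_mul_self.mp hS.nonneg
  rw [Matrix.star_eq_conjTranspose]
  have key : ∀ a b : Fin m → ℂ, star a ⬝ᵥ (Bᴴ * B) *ᵥ b = star (B *ᵥ a) ⬝ᵥ (B *ᵥ b) := by
    intro a b
    rw [← Matrix.mulVec_mulVec, dotProduct_mulVec, ← star_mulVec]
  rw [key, key, key, dot_self_re, dot_self_re]
  calc ‖star (B *ᵥ x) ⬝ᵥ B *ᵥ y‖ ^ 2 ≤ (vecNorm (B *ᵥ x) * vecNorm (B *ᵥ y)) ^ 2 :=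
        pow_le_pow_left₀ (norm_nonneg _) (dot_CS _ _) 2
    _ = vecNorm (B *ᵥ x) ^ 2 * vecNorm (B *ᵥ y) ^ 2 := by ring

lemma dot_re_le_norms (S : Matrix (Fin m) (Fin m) ℂ) (z : Fin m → ℂ) :
    (star z ⬝ᵥ S *ᵥ z).re ≤ specNorm S * vecNorm z ^ 2 := by
  calc (star z ⬝ᵥ S *ᵥ z).re ≤ ‖star z ⬝ᵥ S *ᵥ z‖ := Complex.re_le_norm _
    _ ≤ vecNorm z * vecNorm (S *ᵥ z) := dot_CS _ _
    _ ≤ vecNorm z * (specNorm S * vecNorm z) :=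
        mul_le_mul_of_nonneg_left (mulVec_bound _ _) (vecNorm_nonneg _)
    _ = specNorm S * vecNorm z ^ 2 := by ring

lemma specNorm_nonneg (S : Matrix (Fin m) (Fin m) ℂ) : 0 ≤ specNorm S := norm_nonneg _

-- key lower bound: for PSD S, x*S²x ≤ ‖S‖ x*Sx
lemma psd_sq_dot_le {S : Matrix (Fin m) (Fin m) ℂ} (hS : S.PosSemidef) (x : Fin m → ℂ) :
    (star x ⬝ᵥ (S * S) *ᵥ x).re ≤ specNorm S * (star x ⬝ᵥ S *ᵥ x).re := by
  have hH : Sᴴ = S := hS.1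
  have hsq : star x ⬝ᵥ (S * S) *ᵥ x = star (S *ᵥ x) ⬝ᵥ (S *ᵥ x) := by
    rw [← Matrix.mulVec_mulVec, herm_dot hH]
  set a : ℝ := (star x ⬝ᵥ (S * S) *ᵥ x).re with ha
  have hval : star x ⬝ᵥ (S * S) *ᵥ x = ((vecNorm (S *ᵥ x) ^ 2 : ℝ) : ℂ) := by
    rw [hsq, dot_self_eq_ofReal]
  have ha2 : a = vecNorm (S *ᵥ x) ^ 2 := by rw [ha, hval, Complex.ofReal_re]
  have hanonneg : 0 ≤ a := ha2 ▸ sq_nonneg _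
  rcases hanonneg.lt_or_eq with hpos | hzero
  · have hCS := dot_CS_psd hS x (S *ᵥ x)
    rw [Matrix.mulVec_mulVec] at hCS
    have hre : ‖star x ⬝ᵥ (S * S) *ᵥ x‖ = a := by
      rw [hval, Complex.norm_real, Real.norm_eq_abs, abs_of_nonneg (sq_nonneg _), ← ha2]
    rw [hre] at hCS
    have hlast : (star (S *ᵥ x) ⬝ᵥ (S * S) *ᵥ x).re ≤ specNorm S * a := by
      rw [← Matrix.mulVec_mulVec, ha2]; exact dot_re_le_norms S (S *ᵥ x)
    have h3 : a ^ 2 ≤ (star x ⬝ᵥ S *ᵥ x).re * (specNorm S * a) :=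
      hCS.trans (mul_le_mul_of_nonneg_left hlast (dot_nonneg_parts hS x).1)
    have h4 : a * a ≤ (specNorm S * (star x ⬝ᵥ S *ᵥ x).re) * a := by
      nlinarith [h3]
    exact le_of_mul_le_mul_right h4 hpos
  · rw [← hzero]
    exact mul_nonneg (specNorm_nonneg S) (dot_nonneg_parts hS x).1

end Aux2

namespace Aux3
open Aux Aux2
variable {m : ℕ}

lemma conj_dot (M : Matrix (Fin m) (Fin m) ℂ) (x y : Fin m → ℂ) :
    star (star x ⬝ᵥ M *ᵥ y) = star y ⬝ᵥ Mᴴ *ᵥ x := by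
  rw [star_dotProduct x (M *ᵥ y), star_star, star_mulVec, ← dotProduct_mulVec]

lemma skew_dot_re {J : Matrix (Fin m) (Fin m) ℂ} (hJ : Jᴴ = -J) (v : Fin m → ℂ) :
    (star v ⬝ᵥ J *ᵥ v).re = 0 := by
  have h := conj_dot J v v
  rw [hJ, Matrix.neg_mulVec, dotProduct_neg] at h
  have := congrArg Complex.re h
  simp only [Complex.star_def, Complex.conj_re, Complex.neg_re] at this
  linarith

lemma common_kernel {E J R : Matrix (Fin m) (Fin m) ℂ}
    (hE : E.PosSemidef) (hJ : Jᴴ = -J) (hR : R.PosSemidef)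
    (hdet : (E - (J - R)).det = 0) :
    ∃ v, v ≠ 0 ∧ E *ᵥ v = 0 ∧ J *ᵥ v = 0 ∧ R *ᵥ v = 0 := by
  obtain ⟨v, hv0, hv⟩ := (Matrix.exists_mulVec_eq_zero_iff).mpr hdet
  have hexp : E *ᵥ v - (J *ᵥ v - R *ᵥ v) = 0 := by
    rw [← Matrix.sub_mulVec, ← Matrix.sub_mulVec]; exact hv
  have hdot : star v ⬝ᵥ E *ᵥ v - (star v ⬝ᵥ J *ᵥ v - star v ⬝ᵥ R *ᵥ v) = 0 := by
    rw [← dotProduct_sub, ← dotProduct_sub, hexp, dotProduct_zero]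
  have hre := congrArg Complex.re hdot
  simp only [Complex.sub_re, Complex.zero_re, skew_dot_re hJ] at hre
  have hEnn := dot_nonneg_parts hE v
  have hRnn := dot_nonneg_parts hR v
  have hEre : (star v ⬝ᵥ E *ᵥ v).re = 0 := by linarith
  have hRre : (star v ⬝ᵥ R *ᵥ v).re = 0 := by linarith
  have hEv : E *ᵥ v = 0 := by
    rw [← hE.dotProduct_mulVec_zero_iff v]
    exact Complex.ext (by simpa using hEre) (by simpa using hEnn.2)
  have hRv : R *ᵥ v = 0 := by
    rw [← hR.dotProduct_mulVec_zero_iff v]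
    exact Complex.ext (by simpa using hRre) (by simpa using hRnn.2)
  refine ⟨v, hv0, hEv, ?_, hRv⟩
  have := hexp
  rw [hEv, hRv] at this
  simpa using this

end Aux3

namespace Aux4
open Aux Aux2 Aux3
variable {m : ℕ}

lemma specNorm_zero : specNorm (0 : Matrix (Fin m) (Fin m) ℂ) = 0 := by
  rw [specNorm, map_zero, map_zero, norm_zero]

lemma specNorm_neg (A : Matrix (Fin m) (Fin m) ℂ) : specNorm (-A) = specNorm A := by
  rw [specNorm, map_neg, map_neg, norm_neg, specNorm]

lemma vecNorm_smul (c : ℂ) (x : Fin m → ℂ) : vecNorm (c • x) = ‖c‖ * vecNorm x := by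
  rw [vecNorm_eq, vecNorm_eq]
  have : (WithLp.equiv 2 (Fin m → ℂ)).symm (c • x) = c • (WithLp.equiv 2 (Fin m → ℂ)).symm x := rfl
  rw [this, norm_smul]

lemma outer_mulVec (a z : Fin m → ℂ) :
    Matrix.vecMulVec a (star a) *ᵥ z = (star a ⬝ᵥ z) • a := by
  funext i
  simp [Matrix.vecMulVec_apply, Matrix.mulVec, dotProduct, Finset.mul_sum, mul_comm, mul_assoc,
    mul_left_comm]

lemma outer_herm (a : Fin m → ℂ) :
    (Matrix.vecMulVec a (star a))ᴴ = Matrix.vecMulVec a (star a) := by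
  ext i j
  simp [Matrix.vecMulVec_apply, Matrix.conjTranspose_apply, mul_comm]

lemma star_dot_comm (a z : Fin m → ℂ) : star z ⬝ᵥ a = star (star a ⬝ᵥ z) := by
  rw [star_dotProduct z a]

lemma outer_dot (a z : Fin m → ℂ) :
    star z ⬝ᵥ Matrix.vecMulVec a (star a) *ᵥ z = ((Complex.normSq (star a ⬝ᵥ z) : ℝ) : ℂ) := by
  rw [outer_mulVec, dotProduct_smul, star_dot_comm a z, smul_eq_mul, Complex.star_def,
    Complex.mul_conj]

lemma smul_dot (c : ℂ) (M : Matrix (Fin m) (Fin m) ℂ) (y z : Fin m → ℂ) :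
    star z ⬝ᵥ (c • M) *ᵥ y = c * (star z ⬝ᵥ M *ᵥ y) := by
  rw [Matrix.smul_mulVec, dotProduct_smul, smul_eq_mul]

lemma constructR {R : Matrix (Fin m) (Fin m) ℂ} (hR : R.PosSemidef) (v : Fin m → ℂ)
    (hv : star v ⬝ᵥ v = 1) :
    ∃ dR, (-dR).PosSemidef ∧ (R + dR).PosSemidef ∧ (R + dR) *ᵥ v = 0 ∧
      specNorm dR ≤ (star v ⬝ᵥ (R * R) *ᵥ v).re / (star v ⬝ᵥ R *ᵥ v).re := by
  set t : ℝ := (star v ⬝ᵥ R *ᵥ v).re with ht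
  have htnn : 0 ≤ t := (dot_nonneg_parts hR v).1
  have hnum : (star v ⬝ᵥ (R * R) *ᵥ v).re = vecNorm (R *ᵥ v) ^ 2 := by
    rw [← Matrix.mulVec_mulVec, herm_dot hR.1, dot_self_re]
  rcases htnn.lt_or_eq with htpos | htzero
  · -- t > 0
    set a : Fin m → ℂ := R *ᵥ v with ha
    set P : Matrix (Fin m) (Fin m) ℂ := Matrix.vecMulVec a (star a) with hP
    set S : Matrix (Fin m) (Fin m) ℂ := ((t : ℂ))⁻¹ • P with hS
    have hstar_t : star ((t:ℂ))⁻¹ = ((t:ℂ))⁻¹ := by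
      rw [Complex.star_def, ← Complex.ofReal_inv, Complex.conj_ofReal]
    have hSherm : S.IsHermitian := by
      show Sᴴ = S
      rw [hS, Matrix.conjTranspose_smul, outer_herm, hstar_t]
    have hSdot : ∀ z, star z ⬝ᵥ S *ᵥ z = ((t⁻¹ * Complex.normSq (star a ⬝ᵥ z) : ℝ) : ℂ) := by
      intro z
      rw [hS, smul_dot, outer_dot]
      push_cast
      ring
    have hSpsd : S.PosSemidef := by
      refine Matrix.PosSemidef.of_dotProduct_mulVec_nonneg hSherm fun z => ?_
      rw [hSdot z, Complex.zero_le_real]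
      exact mul_nonneg (inv_nonneg.mpr htnn) (Complex.normSq_nonneg _)
    -- the key coupling : star a ⬝ᵥ z = star v ⬝ᵥ R *ᵥ z
    have hcouple : ∀ z, star a ⬝ᵥ z = star v ⬝ᵥ R *ᵥ z := fun z => (herm_dot hR.1 v z).symm
    have haa : star a ⬝ᵥ v = (t : ℂ) := by
      rw [hcouple v]
      exact Complex.ext (by simp [ht]; rfl) (by simpa using (dot_nonneg_parts hR v).2)
    have hSv : S *ᵥ v = a := by
      rw [hS, Matrix.smul_mulVec, hP, outer_mulVec, haa]
      funext i
      simp [smul_eq_mul, ← mul_assoc]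
      rw [inv_mul_cancel₀ (by exact_mod_cast htpos.ne')]
      simp
    refine ⟨-S, by rwa [neg_neg], ?_, ?_, ?_⟩
    · -- R - S PSD
      refine Matrix.PosSemidef.of_dotProduct_mulVec_nonneg ?_ ?_
      · show (R + -S)ᴴ = R + -S
        rw [Matrix.conjTranspose_add, Matrix.conjTranspose_neg, hR.1, hSherm]
      · intro z
        have hexpand : star z ⬝ᵥ (R + -S) *ᵥ z = star z ⬝ᵥ R *ᵥ z - star z ⬝ᵥ S *ᵥ z := by
          rw [Matrix.add_mulVec, dotProduct_add, Matrix.neg_mulVec, dotProduct_neg]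
          ring
        rw [hexpand, hSdot z]
        have hCS := dot_CS_psd hR v z
        rw [← hcouple z] at hCS
        have him : (star z ⬝ᵥ R *ᵥ z).im = 0 := (dot_nonneg_parts hR z).2
        have hq : Complex.normSq (star a ⬝ᵥ z) = ‖star a ⬝ᵥ z‖ ^ 2 := by
          rw [Complex.normSq_eq_norm_sq]
        have h5 : t⁻¹ * ‖star a ⬝ᵥ z‖ ^ 2 ≤ t⁻¹ * (t * (star z ⬝ᵥ R *ᵥ z).re) :=
          mul_le_mul_of_nonneg_left hCS (inv_nonneg.mpr htnn)
        rw [← mul_assoc, inv_mul_cancel₀ htpos.ne', one_mul] at h5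
        rw [Complex.le_def]
        constructor
        · simp only [Complex.zero_re, Complex.sub_re, Complex.ofReal_re]
          rw [hq]
          linarith
        · simp [him]
    · -- (R - S) v = 0
      rw [Matrix.add_mulVec, Matrix.neg_mulVec, hSv, ha]
      simp
    · -- norm bound
      rw [specNorm_neg, hnum, ht]
      have hb : ∀ z, vecNorm (S *ᵥ z) ≤ (vecNorm a ^ 2 / t) * vecNorm z := by
        intro z
        have : S *ᵥ z = ((t:ℂ))⁻¹ • ((star a ⬝ᵥ z) • a) := by
          rw [hS, Matrix.smul_mulVec, hP, outer_mulVec]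
        rw [this, vecNorm_smul, vecNorm_smul]
        have h1 : ‖((t:ℂ))⁻¹‖ = t⁻¹ := by
          rw [← Complex.ofReal_inv, Complex.norm_real, Real.norm_eq_abs, abs_of_nonneg (by positivity)]
        have h2 : ‖star a ⬝ᵥ z‖ ≤ vecNorm a * vecNorm z := dot_CS a z
        rw [h1]
        calc t⁻¹ * (‖star a ⬝ᵥ z‖ * vecNorm a) ≤ t⁻¹ * ((vecNorm a * vecNorm z) * vecNorm a) := by
              apply mul_le_mul_of_nonneg_left _ (by positivity)
              exact mul_le_mul_of_nonneg_right h2 (vecNorm_nonneg a)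
          _ = (vecNorm a ^ 2 / t) * vecNorm z := by field_simp
      exact specNorm_le _ _ (by positivity) hb
  · -- t = 0 : then R v = 0, take dR = 0
    have hRv : R *ᵥ v = 0 := by
      rw [← hR.dotProduct_mulVec_zero_iff v]
      exact Complex.ext (by simpa using htzero.symm) (by simpa using (dot_nonneg_parts hR v).2)
    refine ⟨0, by rw [neg_zero]; exact Matrix.PosSemidef.zero, by rwa [add_zero], ?_, ?_⟩
    · rw [add_zero, hRv]
    · rw [specNorm_zero, hnum, hRv]
      simp [vecNorm]

end Aux4

namespace Aux5
open Aux Aux2 Aux3 Aux4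
variable {m : ℕ}

lemma abel_helper {G : Type*} [AddCommGroup G] [Module ℂ G] (a : ℂ) (X Y Z W : G) :
    Y - X - (-a) • Z - (-a) • W = -(X - Y - a • Z - a • W) := by
  rw [neg_smul, neg_smul]
  abel

lemma outer2_mulVec (x y z : Fin m → ℂ) :
    Matrix.vecMulVec x (star y) *ᵥ z = (star y ⬝ᵥ z) • x := by
  funext i
  simp [Matrix.vecMulVec_apply, Matrix.mulVec, dotProduct, Finset.mul_sum, mul_comm, mul_assoc,
    mul_left_comm]

lemma outer2_herm (x y : Fin m → ℂ) :
    (Matrix.vecMulVec x (star y))ᴴ = Matrix.vecMulVec y (star x) := by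
  ext i j
  simp [Matrix.vecMulVec_apply, Matrix.conjTranspose_apply, mul_comm]

lemma ortho_norm {v u : Fin m → ℂ} (hv : star v ⬝ᵥ v = 1) (huu : star u ⬝ᵥ u = 1)
    (hvu : star v ⬝ᵥ u = 0) (huv : star u ⬝ᵥ v = 0) (A B : ℂ) :
    vecNorm (A • v + B • u) ^ 2 = Complex.normSq A + Complex.normSq B := by
  rw [← dot_self_re]
  have : star (A • v + B • u) ⬝ᵥ (A • v + B • u)
      = ((Complex.normSq A : ℝ) : ℂ) + ((Complex.normSq B : ℝ) : ℂ) := by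
    simp only [star_add, star_smul, add_dotProduct, dotProduct_add, smul_dotProduct,
      dotProduct_smul, hv, huu, hvu, huv, smul_eq_mul, mul_zero, mul_one, zero_add, add_zero,
      mul_comm]
    rw [← Complex.mul_conj, ← Complex.mul_conj]
    simp [Complex.star_def]
    try ring
  rw [this]
  simp

lemma bessel {v u z : Fin m → ℂ} (hv : star v ⬝ᵥ v = 1) (huu : star u ⬝ᵥ u = 1)
    (hvu : star v ⬝ᵥ u = 0) (huv : star u ⬝ᵥ v = 0) :
    Complex.normSq (star v ⬝ᵥ z) + Complex.normSq (star u ⬝ᵥ z) ≤ vecNorm z ^ 2 := by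
  set s := star v ⬝ᵥ z with hs
  set tt := star u ⬝ᵥ z with htt
  set p := z - s • v - tt • u with hp
  have h0 : 0 ≤ (star p ⬝ᵥ p).re := by rw [dot_self_re]; positivity
  have hzv : star z ⬝ᵥ v = star s := by rw [hs, star_dot_comm]
  have hzu : star z ⬝ᵥ u = star tt := by rw [htt, star_dot_comm]
  have hval : star p ⬝ᵥ p
      = star z ⬝ᵥ z - ((Complex.normSq s : ℝ) : ℂ) - ((Complex.normSq tt : ℝ) : ℂ) := by
    simp only [hp, star_sub, star_smul, sub_dotProduct, dotProduct_sub, smul_dotProduct,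
      dotProduct_smul, hv, huu, hvu, huv, hzv, hzu, ← hs, ← htt, smul_eq_mul, mul_zero, mul_one]
    rw [← Complex.mul_conj, ← Complex.mul_conj]
    simp [Complex.star_def]
    try ring
  rw [hval] at h0
  simp only [Complex.sub_re, Complex.ofReal_re, dot_self_re] at h0
  linarith

lemma vecNorm_unit {v : Fin m → ℂ} (hv : star v ⬝ᵥ v = 1) : vecNorm v = 1 := by
  have h1 : vecNorm v ^ 2 = 1 := by
    rw [← dot_self_re, hv]; simp
  nlinarith [vecNorm_nonneg v]

lemma dot_conjT (M : Matrix (Fin m) (Fin m) ℂ) (x y : Fin m → ℂ) :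
    star x ⬝ᵥ (Mᴴ * M) *ᵥ y = star (M *ᵥ x) ⬝ᵥ (M *ᵥ y) := by
  rw [← Matrix.mulVec_mulVec, dotProduct_mulVec, ← star_mulVec]

lemma constructJ {J : Matrix (Fin m) (Fin m) ℂ} (hJ : Jᴴ = -J) (v : Fin m → ℂ)
    (hv : star v ⬝ᵥ v = 1) :
    ∃ dJ, dJᴴ = -dJ ∧ (J + dJ) *ᵥ v = 0 ∧
      specNorm dJ ^ 2 ≤ (star v ⬝ᵥ (Jᴴ * J) *ᵥ v).re := by
  set w : Fin m → ℂ := J *ᵥ v with hw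
  have hvnorm : vecNorm v = 1 := vecNorm_unit hv
  have htarget : (star v ⬝ᵥ (Jᴴ * J) *ᵥ v).re = vecNorm w ^ 2 := by
    rw [dot_conjT, dot_self_re]
  set α : ℂ := star v ⬝ᵥ w with hα
  have hαskew : starRingEnd ℂ α = -α := by
    have := conj_dot J v v
    rw [hJ, Matrix.neg_mulVec, dotProduct_neg] at this
    rw [hα, hw, ← Complex.star_def]
    exact this
  set wp : Fin m → ℂ := w - α • v with hwp
  have hvwp : star v ⬝ᵥ wp = 0 := by
    rw [hwp, dotProduct_sub, dotProduct_smul, hv, ← hα]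
    simp
  by_cases hwp0 : wp = 0
  · -- w = α • v
    have hwav : w = α • v := by
      have := hwp0
      rw [hwp, sub_eq_zero] at this
      exact this
    refine ⟨(-α) • Matrix.vecMulVec v (star v), ?_, ?_, ?_⟩
    · rw [Matrix.conjTranspose_smul, outer_herm]
      rw [star_neg, Complex.star_def, hαskew]
      simp
    · rw [Matrix.add_mulVec, Matrix.smul_mulVec, outer_mulVec, hv]
      rw [← hw, hwav]
      funext i
      simp
    · rw [htarget]
      have hb : ∀ z, vecNorm (((-α) • Matrix.vecMulVec v (star v)) *ᵥ z) ≤ ‖α‖ * vecNorm z := by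
        intro z
        rw [Matrix.smul_mulVec, outer_mulVec, vecNorm_smul, vecNorm_smul, hvnorm,
          mul_one, norm_neg]
        exact mul_le_mul_of_nonneg_left (by simpa [hvnorm] using dot_CS v z) (norm_nonneg α)
      have h1 : specNorm ((-α) • Matrix.vecMulVec v (star v)) ≤ ‖α‖ :=
        specNorm_le _ _ (norm_nonneg α) hb
      have h2 : vecNorm w = ‖α‖ := by rw [hwav, vecNorm_smul, hvnorm, mul_one]
      rw [h2]
      exact pow_le_pow_left₀ (specNorm_nonneg _) h1 2
  · -- general case
    set c : ℝ := vecNorm wp with hc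
    have hcpos : 0 < c := vecNorm_pos hwp0
    set u : Fin m → ℂ := ((c:ℂ))⁻¹ • wp with hu
    have hcu : (c : ℂ) • u = wp := by
      rw [hu, smul_smul, mul_inv_cancel₀ (by exact_mod_cast hcpos.ne'), one_smul]
    have hvu : star v ⬝ᵥ u = 0 := by
      rw [hu, dotProduct_smul, hvwp, smul_zero]
    have huv : star u ⬝ᵥ v = 0 := by
      rw [star_dot_comm v u, hvu, star_zero]
    have huu : star u ⬝ᵥ u = 1 := by
      have hwpwp : star wp ⬝ᵥ wp = ((c ^ 2 : ℝ) : ℂ) := by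
        rw [dot_self_eq_ofReal, hc]
      rw [hu, star_smul, smul_dotProduct, dotProduct_smul, hwpwp, smul_eq_mul, smul_eq_mul]
      rw [star_inv₀, Complex.star_def, Complex.conj_ofReal]
      push_cast
      field_simp
      try ring
    have hwdec : w = α • v + (c : ℂ) • u := by rw [hcu, hwp]; abel
    have hwz : ∀ z, star w ⬝ᵥ z = -α * (star v ⬝ᵥ z) + (c:ℂ) * (star u ⬝ᵥ z) := by
      intro z
      rw [hwdec]
      simp only [star_add, star_smul, add_dotProduct, smul_dotProduct, smul_eq_mul,
        Complex.star_def, hαskew, Complex.conj_ofReal]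
    set K : Matrix (Fin m) (Fin m) ℂ :=
      Matrix.vecMulVec w (star v) - Matrix.vecMulVec v (star w)
        - α • Matrix.vecMulVec v (star v) - α • Matrix.vecMulVec u (star u) with hK
    have hKherm : Kᴴ = -K := by
      rw [hK]
      rw [Matrix.conjTranspose_sub, Matrix.conjTranspose_sub, Matrix.conjTranspose_sub,
        Matrix.conjTranspose_smul, Matrix.conjTranspose_smul, outer2_herm, outer2_herm,
        outer_herm, outer_herm, Complex.star_def, hαskew]
      exact abel_helper α _ _ _ _
    have hKmul : ∀ z, K *ᵥ z = (star v ⬝ᵥ z) • w - (star w ⬝ᵥ z) • v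
        - (α * (star v ⬝ᵥ z)) • v - (α * (star u ⬝ᵥ z)) • u := by
      intro z
      rw [hK, Matrix.sub_mulVec, Matrix.sub_mulVec, Matrix.sub_mulVec,
        Matrix.smul_mulVec, Matrix.smul_mulVec, outer2_mulVec, outer2_mulVec,
        outer_mulVec, outer_mulVec, smul_smul, smul_smul]
    have hKv : K *ᵥ v = w := by
      have hwv : star w ⬝ᵥ v = -α := by
        rw [star_dot_comm v w, ← hα, Complex.star_def, hαskew]
      rw [hKmul v, hv, hwv, huv]
      module
    have hKz_eq : ∀ z, K *ᵥ z = (α * (star v ⬝ᵥ z) - (c:ℂ) * (star u ⬝ᵥ z)) • v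
        + ((c:ℂ) * (star v ⬝ᵥ z) - α * (star u ⬝ᵥ z)) • u := by
      intro z
      rw [hKmul z, hwz z, hwdec]
      module
    have hKnorm : ∀ z, vecNorm (K *ᵥ z) ≤ vecNorm w * vecNorm z := by
      intro z
      set s := star v ⬝ᵥ z with hs
      set tt := star u ⬝ᵥ z with htt
      set A := α * s - (c:ℂ) * tt with hA
      set B := (c:ℂ) * s - α * tt with hB
      have h1 : vecNorm (K *ᵥ z) ^ 2 = Complex.normSq A + Complex.normSq B := by
        rw [hKz_eq z, ortho_norm hv huu hvu huv]
      have hkey : A * starRingEnd ℂ A + B * starRingEnd ℂ B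
          = ((Complex.normSq α : ℂ) + (c:ℂ) ^ 2) * ((Complex.normSq s : ℂ) + (Complex.normSq tt : ℂ)) := by
        rw [← Complex.mul_conj, ← Complex.mul_conj, ← Complex.mul_conj]
        rw [hA, hB]
        simp only [map_sub, _root_.map_mul, hαskew, Complex.conj_ofReal]
        ring
      have hkey2 : Complex.normSq A + Complex.normSq B
          = (Complex.normSq α + c ^ 2) * (Complex.normSq s + Complex.normSq tt) := by
        have := congrArg Complex.re hkey
        rw [Complex.mul_conj, Complex.mul_conj] at this
        push_cast at this
        exact_mod_cast this
      have hwn : vecNorm w ^ 2 = Complex.normSq α + c ^ 2 := by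
        rw [hwdec, ortho_norm hv huu hvu huv]
        rw [Complex.normSq_ofReal]
        ring
      have hbes := bessel hv huu hvu huv (z := z)
      rw [← hs, ← htt] at hbes
      have h2 : vecNorm (K *ᵥ z) ^ 2 ≤ (vecNorm w * vecNorm z) ^ 2 := by
        rw [h1, hkey2, ← hwn, mul_pow]
        exact mul_le_mul_of_nonneg_left hbes (sq_nonneg _)
      nlinarith [vecNorm_nonneg (K *ᵥ z), vecNorm_nonneg w, vecNorm_nonneg z,
        mul_nonneg (vecNorm_nonneg w) (vecNorm_nonneg z)]
    refine ⟨-K, ?_, ?_, ?_⟩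
    · rw [Matrix.conjTranspose_neg, hKherm, neg_neg]
    · rw [Matrix.add_mulVec, Matrix.neg_mulVec, hKv, ← hw]
      simp
    · rw [htarget, specNorm_neg]
      exact pow_le_pow_left₀ (specNorm_nonneg _)
        (specNorm_le _ _ (vecNorm_nonneg w) hKnorm) 2

end Aux5

namespace Aux6
open Aux Aux2 Aux3 Aux4 Aux5
variable {n r : ℕ}

-- N-plumbing
lemma dotN (N : Matrix (Fin n) (Fin r) ℂ) (M : Matrix (Fin n) (Fin n) ℂ) (x : Fin r → ℂ) :
    star x ⬝ᵥ (Nᴴ * M * N) *ᵥ x = star (N *ᵥ x) ⬝ᵥ M *ᵥ (N *ᵥ x) := by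
  rw [← Matrix.mulVec_mulVec, ← Matrix.mulVec_mulVec, dotProduct_mulVec, ← star_mulVec]

lemma dotN_id {N : Matrix (Fin n) (Fin r) ℂ} (hNN : Nᴴ * N = 1) (x : Fin r → ℂ) :
    star (N *ᵥ x) ⬝ᵥ (N *ᵥ x) = star x ⬝ᵥ x := by
  have h := dotN N 1 x
  rw [Matrix.mul_one, hNN, Matrix.one_mulVec, Matrix.one_mulVec] at h
  exact h.symm

lemma N_inj {N : Matrix (Fin n) (Fin r) ℂ} (hNN : Nᴴ * N = 1) {x : Fin r → ℂ}
    (h : N *ᵥ x = 0) : x = 0 := by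
  have : (Nᴴ * N) *ᵥ x = Nᴴ *ᵥ (N *ᵥ x) := (Matrix.mulVec_mulVec _ _ _).symm
  rw [hNN, h, Matrix.mulVec_zero, Matrix.one_mulVec] at this
  exact this

lemma vecNorm_neg (y : Fin n → ℂ) : vecNorm (-y) = vecNorm y := by
  simp [vecNorm]

lemma key_lower {E J R dJ dR : Matrix (Fin n) (Fin n) ℂ} {N : Matrix (Fin n) (Fin r) ℂ}
    (hE : E.PosSemidef) (hJ : Jᴴ = -J) (hR : R.PosSemidef)
    (hNN : Nᴴ * N = 1) (hker : ∀ v : Fin n → ℂ, E *ᵥ v = 0 ↔ ∃ c : Fin r → ℂ, v = N *ᵥ c)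
    (hS : SdJR R dJ dR) (hsing : pencilSingular E (J + dJ - (R + dR))) :
    ∃ x : Fin r → ℂ, x ≠ 0 ∧
      ((star x ⬝ᵥ (Nᴴ * (R * R) * N) *ᵥ x).re / (star x ⬝ᵥ (Nᴴ * R * N) *ᵥ x).re) ^ 2
        + (star x ⬝ᵥ (Nᴴ * Jᴴ * J * N) *ᵥ x).re / (star x ⬝ᵥ x).re
      ≤ specNorm dJ ^ 2 + specNorm dR ^ 2 := by
  obtain ⟨hdJ, hdRpsd, hRdR⟩ := hS
  have hdet := hsing 1
  rw [one_smul] at hdet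
  have hJ' : (J + dJ)ᴴ = -(J + dJ) := by
    rw [Matrix.conjTranspose_add, hJ, hdJ, neg_add]
  obtain ⟨v, hv0, hEv, hJdJv, hRdRv⟩ := common_kernel hE hJ' hRdR hdet
  obtain ⟨x, hx⟩ := (hker v).mp hEv
  have hx0 : x ≠ 0 := by
    intro h
    apply hv0
    rw [hx, h, Matrix.mulVec_zero]
  refine ⟨x, hx0, ?_⟩
  have hxx : (star x ⬝ᵥ x).re = vecNorm v ^ 2 := by
    rw [← dotN_id hNN x, ← hx, dot_self_re]
  have hvpos : 0 < vecNorm v := vecNorm_pos hv0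
  -- J part
  have hdJv : dJ *ᵥ v = -(J *ᵥ v) := by
    rw [Matrix.add_mulVec] at hJdJv
    exact eq_neg_of_add_eq_zero_left (add_comm (J *ᵥ v) (dJ *ᵥ v) ▸ hJdJv)
  have hJterm : (star x ⬝ᵥ (Nᴴ * Jᴴ * J * N) *ᵥ x).re = vecNorm (J *ᵥ v) ^ 2 := by
    rw [show Nᴴ * Jᴴ * J * N = Nᴴ * (Jᴴ * J) * N from by rw [Matrix.mul_assoc Nᴴ Jᴴ J],
      dotN, ← hx, dot_conjT, dot_self_re]
  have hJbound : (star x ⬝ᵥ (Nᴴ * Jᴴ * J * N) *ᵥ x).re / (star x ⬝ᵥ x).re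
      ≤ specNorm dJ ^ 2 := by
    rw [hJterm, hxx, div_le_iff₀ (by positivity)]
    have h1 : vecNorm (J *ᵥ v) ≤ specNorm dJ * vecNorm v := by
      rw [← vecNorm_neg, ← hdJv]
      exact mulVec_bound dJ v
    calc vecNorm (J *ᵥ v) ^ 2 ≤ (specNorm dJ * vecNorm v) ^ 2 :=
          pow_le_pow_left₀ (vecNorm_nonneg _) h1 2
      _ = specNorm dJ ^ 2 * vecNorm v ^ 2 := by ring
  -- R part
  set S : Matrix (Fin n) (Fin n) ℂ := -dR with hSdef
  have hSv : S *ᵥ v = R *ᵥ v := by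
    rw [Matrix.add_mulVec] at hRdRv
    rw [hSdef, Matrix.neg_mulVec]
    exact neg_eq_of_add_eq_zero_right (add_comm (R *ᵥ v) (dR *ᵥ v) ▸ hRdRv)
  have hnum : (star x ⬝ᵥ (Nᴴ * (R * R) * N) *ᵥ x).re = (star v ⬝ᵥ (S * S) *ᵥ v).re := by
    rw [dotN, ← hx]
    rw [← Matrix.mulVec_mulVec, herm_dot hR.1, dot_self_re]
    rw [← Matrix.mulVec_mulVec, herm_dot hdRpsd.1, hSv, dot_self_re]
  have hden : (star x ⬝ᵥ (Nᴴ * R * N) *ᵥ x).re = (star v ⬝ᵥ S *ᵥ v).re := by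
    rw [dotN, ← hx, ← hSv]
  have hRkey := psd_sq_dot_le hdRpsd v
  have hspecS : specNorm S = specNorm dR := specNorm_neg dR
  have hnumnn : 0 ≤ (star v ⬝ᵥ (S * S) *ᵥ v).re := by
    rw [← Matrix.mulVec_mulVec, herm_dot hdRpsd.1, dot_self_re]
    positivity
  have hdennn : 0 ≤ (star v ⬝ᵥ S *ᵥ v).re := (dot_nonneg_parts hdRpsd v).1
  have hRbound : ((star x ⬝ᵥ (Nᴴ * (R * R) * N) *ᵥ x).re
      / (star x ⬝ᵥ (Nᴴ * R * N) *ᵥ x).re) ^ 2 ≤ specNorm dR ^ 2 := by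
    rw [hnum, hden]
    rcases hdennn.lt_or_eq with hpos | hzero
    · have h1 : (star v ⬝ᵥ (S * S) *ᵥ v).re / (star v ⬝ᵥ S *ᵥ v).re ≤ specNorm dR := by
        rw [div_le_iff₀ hpos, ← hspecS]
        exact hRkey
      exact pow_le_pow_left₀ (div_nonneg hnumnn hdennn) h1 2
    · have hnum0 : (star v ⬝ᵥ (S * S) *ᵥ v).re = 0 := by
        have := hRkey
        rw [← hzero] at this
        simp only [mul_zero] at this
        linarith
      rw [hnum0, zero_div]
      simpa using sq_nonneg (specNorm dR)
  linarith [hRbound, hJbound]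

lemma dot_scale (M : Matrix (Fin n) (Fin n) ℂ) (v : Fin n → ℂ) (k : ℝ) :
    (star ((k:ℂ) • v) ⬝ᵥ M *ᵥ ((k:ℂ) • v)).re = k ^ 2 * (star v ⬝ᵥ M *ᵥ v).re := by
  rw [Matrix.mulVec_smul, star_smul, smul_dotProduct, dotProduct_smul]
  rw [smul_eq_mul, smul_eq_mul, Complex.star_def, Complex.conj_ofReal]
  rw [← mul_assoc, ← Complex.ofReal_mul, Complex.re_ofReal_mul]
  ring

lemma key_upper {E J R : Matrix (Fin n) (Fin n) ℂ} {N : Matrix (Fin n) (Fin r) ℂ}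
    (hJ : Jᴴ = -J) (hR : R.PosSemidef)
    (hNN : Nᴴ * N = 1) (hker : ∀ v : Fin n → ℂ, E *ᵥ v = 0 ↔ ∃ c : Fin r → ℂ, v = N *ᵥ c)
    (x : Fin r → ℂ) (hx : x ≠ 0) :
    ∃ dJ dR : Matrix (Fin n) (Fin n) ℂ, SdJR R dJ dR ∧
      pencilSingular E (J + dJ - (R + dR)) ∧
      specNorm dJ ^ 2 + specNorm dR ^ 2 ≤
        ((star x ⬝ᵥ (Nᴴ * (R * R) * N) *ᵥ x).re / (star x ⬝ᵥ (Nᴴ * R * N) *ᵥ x).re) ^ 2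
          + (star x ⬝ᵥ (Nᴴ * Jᴴ * J * N) *ᵥ x).re / (star x ⬝ᵥ x).re := by
  set k : ℝ := vecNorm x with hk
  have hkpos : 0 < k := vecNorm_pos hx
  set v0 : Fin n → ℂ := N *ᵥ x with hv0
  have hv0x : star v0 ⬝ᵥ v0 = star x ⬝ᵥ x := dotN_id hNN x
  have hv0norm : vecNorm v0 = k := by
    have h1 : vecNorm v0 ^ 2 = vecNorm x ^ 2 := by rw [← dot_self_re, hv0x, dot_self_re]
    nlinarith [vecNorm_nonneg v0, vecNorm_nonneg x, hkpos]
  set v : Fin n → ℂ := ((k:ℂ))⁻¹ • v0 with hv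
  have hkne : (k:ℂ) ≠ 0 := by exact_mod_cast hkpos.ne'
  have hv0v : v0 = (k:ℂ) • v := by
    rw [hv, smul_smul, mul_inv_cancel₀ hkne, one_smul]
  have hvnorm : vecNorm v = 1 := by
    rw [hv, vecNorm_smul, ← Complex.ofReal_inv, Complex.norm_real, Real.norm_eq_abs,
      abs_of_nonneg (inv_nonneg.mpr hkpos.le), hv0norm]
    field_simp
  have hvunit : star v ⬝ᵥ v = 1 := by
    rw [dot_self_eq_ofReal, hvnorm]
    norm_num
  have hEv : E *ᵥ v = 0 := by
    have h0 : E *ᵥ v0 = 0 := (hker v0).mpr ⟨x, rfl⟩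
    rw [hv, Matrix.mulVec_smul, h0, smul_zero]
  have hvne : v ≠ 0 := by
    intro h
    rw [h] at hvunit
    simp at hvunit
  obtain ⟨dR, hdRpsd, hRdRpsd, hRdRv, hdRnorm⟩ := constructR hR v hvunit
  obtain ⟨dJ, hdJskew, hJdJv, hdJnorm⟩ := constructJ hJ v hvunit
  refine ⟨dJ, dR, ⟨hdJskew, hdRpsd, hRdRpsd⟩, ?_, ?_⟩
  · intro lam
    apply Matrix.exists_mulVec_eq_zero_iff.mp
    refine ⟨v, hvne, ?_⟩
    rw [Matrix.sub_mulVec, Matrix.smul_mulVec, hEv, smul_zero, Matrix.sub_mulVec,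
      hJdJv, hRdRv]
    simp
  · have hk2 : (k : ℝ) ^ 2 ≠ 0 := pow_ne_zero 2 hkpos.ne'
    have hA : (star x ⬝ᵥ (Nᴴ * (R * R) * N) *ᵥ x).re
        = k ^ 2 * (star v ⬝ᵥ (R * R) *ᵥ v).re := by
      rw [dotN, ← hv0, hv0v, dot_scale]
    have hB : (star x ⬝ᵥ (Nᴴ * R * N) *ᵥ x).re = k ^ 2 * (star v ⬝ᵥ R *ᵥ v).re := by
      rw [dotN, ← hv0, hv0v, dot_scale]
    have hC : (star x ⬝ᵥ (Nᴴ * Jᴴ * J * N) *ᵥ x).re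
        = k ^ 2 * (star v ⬝ᵥ (Jᴴ * J) *ᵥ v).re := by
      rw [show Nᴴ * Jᴴ * J * N = Nᴴ * (Jᴴ * J) * N from by rw [Matrix.mul_assoc Nᴴ Jᴴ J],
        dotN, ← hv0, hv0v, dot_scale]
    have hD : (star x ⬝ᵥ x).re = k ^ 2 := by
      rw [← hv0x, dot_self_re, hv0norm]
    rw [hA, hB, hC, hD, mul_div_mul_left _ _ hk2, mul_div_cancel_left₀ _ hk2]
    have h2 : specNorm dR ^ 2
        ≤ ((star v ⬝ᵥ (R * R) *ᵥ v).re / (star v ⬝ᵥ R *ᵥ v).re) ^ 2 := by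
      refine pow_le_pow_left₀ (specNorm_nonneg _) hdRnorm 2
    linarith [hdJnorm, h2]

end Aux6

/-- for a regular dH pencil, if `E` is positive definite there is no structured
perturbation in `S_d(J,R)` making the pencil singular (so `d_sing^{S_d}(J,R) = ∞`); if `E` is
singular with `N` an orthonormal basis matrix of `ker E` (of dimension `r ≥ 1`), then
`d_sing^{S_d}(J,R)²` is given by the stated Rayleigh-quotient infimum.  (Real division by zero
is `0` in Lean, matching the `0/0 = 0` convention.) -/
theorem dH_dist_sing_SdJR {n : ℕ} (E J R : Matrix (Fin n) (Fin n) ℂ)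
    (hE : E.PosSemidef) (hJ : Jᴴ = -J) (hR : R.PosSemidef)
    (hreg : ∃ μ : ℂ, Matrix.det (μ • E - (J - R)) ≠ 0) :
    (E.PosDef →
      (¬ ∃ dJ dR : Matrix (Fin n) (Fin n) ℂ, SdJR R dJ dR ∧
        pencilSingular E (J + dJ - (R + dR))) ∧
      dSingSdJR E J R = ⊤) ∧
    (∀ (r : ℕ) (N : Matrix (Fin n) (Fin r) ℂ), 1 ≤ r → Nᴴ * N = 1 →
      (∀ v : Fin n → ℂ, E *ᵥ v = 0 ↔ ∃ c : Fin r → ℂ, v = N *ᵥ c) →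
      (dSingSdJR E J R) ^ 2 =
        ENNReal.ofReal (sInf {q : ℝ | ∃ x : Fin r → ℂ, x ≠ 0 ∧
          q = ((star x ⬝ᵥ (Nᴴ * (R * R) * N) *ᵥ x).re /
                (star x ⬝ᵥ (Nᴴ * R * N) *ᵥ x).re) ^ 2
            + (star x ⬝ᵥ (Nᴴ * Jᴴ * J * N) *ᵥ x).re / (star x ⬝ᵥ x).re})) := by
  constructor
  · intro hEpd
    have hno : ¬ ∃ dJ dR : Matrix (Fin n) (Fin n) ℂ, SdJR R dJ dR ∧
        pencilSingular E (J + dJ - (R + dR)) := by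
      rintro ⟨dJ, dR, ⟨hdJ, hdRpsd, hRdR⟩, hsing⟩
      have hdet := hsing 1
      rw [one_smul] at hdet
      have hJ' : (J + dJ)ᴴ = -(J + dJ) := by
        rw [Matrix.conjTranspose_add, hJ, hdJ, neg_add]
      obtain ⟨v, hv0, hEv, -, -⟩ := Aux3.common_kernel hE hJ' hRdR hdet
      have hlt := hEpd.dotProduct_mulVec_pos hv0
      rw [hEv, dotProduct_zero] at hlt
      exact lt_irrefl _ hlt
    refine ⟨hno, ?_⟩
    rw [dSingSdJR]
    refine (congrArg sInf ?_).trans sInf_empty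
    rw [Set.eq_empty_iff_forall_notMem]
    rintro c ⟨dJ, dR, hS, hsing, -⟩
    exact hno ⟨dJ, dR, hS, hsing⟩
  · intro r N hr hNN hker
    set Q : Set ℝ := {q : ℝ | ∃ x : Fin r → ℂ, x ≠ 0 ∧
      q = ((star x ⬝ᵥ (Nᴴ * (R * R) * N) *ᵥ x).re /
            (star x ⬝ᵥ (Nᴴ * R * N) *ᵥ x).re) ^ 2
        + (star x ⬝ᵥ (Nᴴ * Jᴴ * J * N) *ᵥ x).re / (star x ⬝ᵥ x).re} with hQdef
    have hQnonneg : ∀ q ∈ Q, (0:ℝ) ≤ q := by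
      rintro q ⟨x, hx0, rfl⟩
      have hnum : (star x ⬝ᵥ (Nᴴ * Jᴴ * J * N) *ᵥ x).re
          = vecNorm (J *ᵥ (N *ᵥ x)) ^ 2 := by
        rw [show Nᴴ * Jᴴ * J * N = Nᴴ * (Jᴴ * J) * N from by rw [Matrix.mul_assoc Nᴴ Jᴴ J],
          Aux6.dotN, Aux5.dot_conjT, Aux.dot_self_re]
      have hden : (0:ℝ) ≤ (star x ⬝ᵥ x).re := by
        rw [Aux.dot_self_re]; exact sq_nonneg _
      have h2 : (0:ℝ) ≤ (star x ⬝ᵥ (Nᴴ * Jᴴ * J * N) *ᵥ x).re := by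
        rw [hnum]; exact sq_nonneg _
      exact add_nonneg (sq_nonneg _) (div_nonneg h2 hden)
    have hQbdd : BddBelow Q := ⟨0, fun q hq => hQnonneg q hq⟩
    have hQne : Q.Nonempty := by
      have hi : (0:ℕ) < r := hr
      refine ⟨_, ⟨(fun _ => 1 : Fin r → ℂ), ?_, rfl⟩⟩
      intro h
      have := congrFun h ⟨0, hi⟩
      simp at this
    have hQinf_nonneg : (0:ℝ) ≤ sInf Q := le_csInf hQne (fun q hq => hQnonneg q hq)
    -- lower bound
    have hlow : ENNReal.ofReal (Real.sqrt (sInf Q)) ≤ dSingSdJR E J R := by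
      apply le_sInf
      rintro c ⟨dJ, dR, hS, hsing, rfl⟩
      obtain ⟨x, hx0, hle⟩ := Aux6.key_lower hE hJ hR hNN hker hS hsing
      have h1 : sInf Q ≤ _ := csInf_le hQbdd ⟨x, hx0, rfl⟩
      have h2 : Real.sqrt (sInf Q) ≤ pairNorm dJ dR := by
        rw [pairNorm]
        exact Real.sqrt_le_sqrt (h1.trans hle)
      exact ENNReal.ofReal_le_ofReal h2
    have hlow2 : ENNReal.ofReal (sInf Q) ≤ (dSingSdJR E J R) ^ 2 := by
      have : ENNReal.ofReal (sInf Q) = (ENNReal.ofReal (Real.sqrt (sInf Q))) ^ 2 := by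
        rw [← ENNReal.ofReal_pow (Real.sqrt_nonneg _), Real.sq_sqrt hQinf_nonneg]
      rw [this]
      exact pow_le_pow_left₀ (zero_le) hlow 2
    -- upper bound
    have hup : ∀ q ∈ Q, dSingSdJR E J R ≤ ENNReal.ofReal (Real.sqrt q) := by
      rintro q ⟨x, hx0, rfl⟩
      obtain ⟨dJ, dR, hS, hsing, hle⟩ := Aux6.key_upper hJ hR hNN hker x hx0
      refine le_trans (sInf_le ⟨dJ, dR, hS, hsing, rfl⟩) ?_
      apply ENNReal.ofReal_le_ofReal
      rw [pairNorm]
      exact Real.sqrt_le_sqrt hle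
    have hD2le : ∀ q ∈ Q, (dSingSdJR E J R) ^ 2 ≤ ENNReal.ofReal q := by
      intro q hq
      calc (dSingSdJR E J R) ^ 2 ≤ (ENNReal.ofReal (Real.sqrt q)) ^ 2 :=
            pow_le_pow_left₀ (zero_le) (hup q hq) 2
        _ = ENNReal.ofReal (Real.sqrt q ^ 2) := (ENNReal.ofReal_pow (Real.sqrt_nonneg q) 2).symm
        _ = ENNReal.ofReal q := by rw [Real.sq_sqrt (hQnonneg q hq)]
    obtain ⟨q0, hq0⟩ := hQne
    have hfin : (dSingSdJR E J R) ^ 2 ≠ ⊤ :=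
      ne_top_of_le_ne_top ENNReal.ofReal_ne_top (hD2le q0 hq0)
    have hdQ : ((dSingSdJR E J R) ^ 2).toReal ≤ sInf Q := by
      apply le_csInf ⟨q0, hq0⟩
      intro q hq
      have h := hD2le q hq
      rw [← ENNReal.ofReal_toReal hfin] at h
      exact (ENNReal.ofReal_le_ofReal_iff (hQnonneg q hq)).mp h
    have hupfinal : (dSingSdJR E J R) ^ 2 ≤ ENNReal.ofReal (sInf Q) := by
      calc (dSingSdJR E J R) ^ 2 = ENNReal.ofReal (((dSingSdJR E J R) ^ 2).toReal) :=
            (ENNReal.ofReal_toReal hfin).symm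
        _ ≤ ENNReal.ofReal (sInf Q) := ENNReal.ofReal_le_ofReal hdQ
    exact le_antisymm hupfinal hlow2
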